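/- arXiv:1208.3386 — 2 statements merged into one kernel-verified Lean document; each statement's English description precedes it below -/
import Mathlib

section
/- Let B_r := {x ∈ H : |x|_H ≤ r} with the weak topology, metrized by a metric q. If functions u_n : [0,T] → H satisfy (i) sup_n sup_{s∈[0,T]} |u_n(s)|_H ≤ r and (ii) u_n → u in C([0,T]; U′), then u and all u_n belong to C([0,T]; B_r-weak) and sup_{t∈[0,T]} q(u_n(t), u(t)) → 0, i.e. u_n → u in C([0,T]; B_r-weak). -/
open MeasureTheory Filter
open scoped RealInnerProductSpace

/-- The embedding `H ≅ H′ ↪ U′` induced by a dense embedding `ι : U ↪ H`: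
`h ∈ H` acts on `φ ∈ U` by `⟨h, φ⟩ = (h, ιφ)_H`. -/
noncomputable def dualEmbed {U H : Type*}
    [NormedAddCommGroup U] [InnerProductSpace ℝ U]
    [NormedAddCommGroup H] [InnerProductSpace ℝ H]
    (ι : U →L[ℝ] H) (h : H) : StrongDual ℝ U :=
  (innerSL ℝ h).comp ι

section Aux

variable {U H : Type*}
    [NormedAddCommGroup U] [InnerProductSpace ℝ U]
    [NormedAddCommGroup H] [InnerProductSpace ℝ H]

lemma dualEmbed_apply (ι : U →L[ℝ] H) (x : H) (φ : U) :
    dualEmbed ι x φ = ⟪x, ι φ⟫ := rfl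

lemma mul_lt_half {a b ε : ℝ} (ha : 0 ≤ a) (hb : 0 ≤ b)
    (h : a < ε / (2 * (b + 1))) : a * b < ε / 2 := by
  have h1 : a * b ≤ a * (b + 1) := by nlinarith
  have h2 : a * (b + 1) < ε / (2 * (b + 1)) * (b + 1) :=
    mul_lt_mul_of_pos_right h (by linarith)
  have h3 : ε / (2 * (b + 1)) * (b + 1) = ε / 2 := by
    field_simp
  linarith

lemma norm_le_of_inner_le (ι : U →L[ℝ] H) (hdense : DenseRange ι) (x : H) {r : ℝ} (hr : 0 ≤ r)
    (hx : ∀ φ : U, |⟪x, ι φ⟫| ≤ r * ‖ι φ‖) : ‖x‖ ≤ r := by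
  have hall : ∀ y : H, |⟪x, y⟫| ≤ r * ‖y‖ := by
    have hclosed : IsClosed {y : H | |⟪x, y⟫| ≤ r * ‖y‖} := by
      apply isClosed_le
      · exact (continuous_const.inner continuous_id).abs
      · exact continuous_const.mul continuous_norm
    have hsub : Set.range ι ⊆ {y : H | |⟪x, y⟫| ≤ r * ‖y‖} := by
      rintro y ⟨φ, rfl⟩; exact hx φ
    have := hclosed.closure_subset_iff.mpr hsub
    rw [hdense.closure_range] at this
    exact fun y => this (Set.mem_univ y)
  have hxx := hall x
  rw [real_inner_self_eq_norm_sq, abs_of_nonneg (by positivity)] at hxx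
  rcases eq_or_lt_of_le (norm_nonneg x) with h0 | h0
  · rw [← h0]; exact hr
  · nlinarith [hxx]

/-- Key estimate: for bounded `x, y`, the inner product with `h` is controlled by the
dual norm of `dualEmbed x - dualEmbed y` and an approximation `ι φ` of `h`. -/
lemma key_est (ι : U →L[ℝ] H) {r : ℝ} (x y : H)
    (hx : ‖x‖ ≤ r) (hy : ‖y‖ ≤ r) (h : H) (φ : U) :
    |⟪x, h⟫ - ⟪y, h⟫| ≤ ‖dualEmbed ι x - dualEmbed ι y‖ * ‖φ‖ + 2 * r * ‖h - ι φ‖ := by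
  have e1 : ⟪x, h⟫ - ⟪y, h⟫ = ⟪x - y, ι φ⟫ + ⟪x - y, h - ι φ⟫ := by
    simp [inner_sub_left, inner_sub_right]
  have h1 : |⟪x - y, ι φ⟫| ≤ ‖dualEmbed ι x - dualEmbed ι y‖ * ‖φ‖ := by
    have : ⟪x - y, ι φ⟫ = (dualEmbed ι x - dualEmbed ι y) φ := by
      simp [dualEmbed_apply, inner_sub_left]
    rw [this, ← Real.norm_eq_abs]
    exact (dualEmbed ι x - dualEmbed ι y).le_opNorm φ
  have h2 : |⟪x - y, h - ι φ⟫| ≤ 2 * r * ‖h - ι φ‖ := by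
    calc |⟪x - y, h - ι φ⟫| ≤ ‖x - y‖ * ‖h - ι φ‖ := abs_real_inner_le_norm _ _
      _ ≤ 2 * r * ‖h - ι φ‖ := by
          apply mul_le_mul_of_nonneg_right _ (norm_nonneg _)
          calc ‖x - y‖ ≤ ‖x‖ + ‖y‖ := norm_sub_le _ _
            _ ≤ 2 * r := by linarith
  calc |⟪x, h⟫ - ⟪y, h⟫| = |⟪x - y, ι φ⟫ + ⟪x - y, h - ι φ⟫| := by rw [e1]
    _ ≤ |⟪x - y, ι φ⟫| + |⟪x - y, h - ι φ⟫| := abs_add_le _ _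
    _ ≤ _ := add_le_add h1 h2

lemma approx_bounds (ι : U →L[ℝ] H) (hdense : DenseRange ι) {r ε : ℝ}
    (hr : 0 ≤ r) (hε : 0 < ε) (h : H) :
    ∃ φ : U, 2 * r * ‖h - ι φ‖ < ε / 2 := by
  obtain ⟨φ, hφ⟩ := hdense.exists_dist_lt h (show (0:ℝ) < ε / (4 * (r + 1)) by positivity)
  refine ⟨φ, ?_⟩
  rw [dist_eq_norm] at hφ
  have hn : (0:ℝ) ≤ ‖h - ι φ‖ := norm_nonneg _
  rcases eq_or_lt_of_le hr with h0 | h0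
  · rw [← h0]
    simp
    positivity
  · have step : 2 * r * ‖h - ι φ‖ < 2 * r * (ε / (4 * (r + 1))) :=
      mul_lt_mul_of_pos_left hφ (by linarith)
    have step2 : 2 * r * (ε / (4 * (r + 1))) ≤ ε / 2 := by
      have he : 2 * r * (ε / (4 * (r + 1))) = (2 * r * ε) / (4 * (r + 1)) := by ring
      rw [he, div_le_div_iff₀ (by positivity) two_pos]
      nlinarith
    linarith

end Aux

/-- (Lemma 3.6.)  If `u_n : [0,T] → H` satisfy (i) `sup_n sup_s |u_n(s)|_H ≤ r` and
(ii) `u_n → u` in `C([0,T];U′)`, then `u` and all `u_n` belong to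
`C([0,T]; B_r-weak)` and `u_n → u` in `C([0,T]; B_r-weak)`, i.e. the functions take
values in the ball of radius `r`, are weakly continuous, and
`(u_n(·), h)_H → (u(·), h)_H` uniformly on `[0,T]` for every `h ∈ H`. -/
theorem stmt_11 {U H : Type*}
    [NormedAddCommGroup U] [InnerProductSpace ℝ U] [CompleteSpace U]
    [NormedAddCommGroup H] [InnerProductSpace ℝ H] [CompleteSpace H]
    (ι : U →L[ℝ] H) (hinj : Function.Injective ι) (hdense : DenseRange ι)
    (T r : ℝ) (hT : 0 < T) (hr : 0 < r)
    (u : ℝ → H) (un : ℕ → ℝ → H)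
    (hbdd : ∀ n, ∀ s ∈ Set.Icc (0:ℝ) T, ‖un n s‖ ≤ r)
    (hcont : ∀ n, ContinuousOn (fun t => dualEmbed ι (un n t)) (Set.Icc 0 T))
    (hconv : TendstoUniformlyOn (fun n t => dualEmbed ι (un n t))
      (fun t => dualEmbed ι (u t)) atTop (Set.Icc 0 T)) :
    (∀ t ∈ Set.Icc (0:ℝ) T, ‖u t‖ ≤ r) ∧
      (∀ h : H, ContinuousOn (fun t => ⟪u t, h⟫) (Set.Icc 0 T)) ∧
      (∀ n, ∀ h : H, ContinuousOn (fun t => ⟪un n t, h⟫) (Set.Icc 0 T)) ∧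
      (∀ h : H, TendstoUniformlyOn (fun n t => ⟪un n t, h⟫)
        (fun t => ⟪u t, h⟫) atTop (Set.Icc 0 T)) := by
  -- norm bound on `u`
  have hub : ∀ t ∈ Set.Icc (0:ℝ) T, ‖u t‖ ≤ r := by
    intro t ht
    apply norm_le_of_inner_le ι hdense _ hr.le
    intro φ
    -- pointwise convergence of the evaluation at `φ`
    have hpt : Tendsto (fun n => dualEmbed ι (un n t)) atTop (nhds (dualEmbed ι (u t))) :=
      hconv.tendsto_at ht
    have hev : Tendsto (fun n => ⟪un n t, ι φ⟫) atTop (nhds ⟪u t, ι φ⟫) := by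
      have : Continuous fun f : StrongDual ℝ U => f φ :=
        (ContinuousLinearMap.apply ℝ ℝ φ).continuous
      exact (this.tendsto _).comp hpt
    have hb : ∀ n, |⟪un n t, ι φ⟫| ≤ r * ‖ι φ‖ := fun n =>
      (abs_real_inner_le_norm _ _).trans
        (mul_le_mul_of_nonneg_right (hbdd n t ht) (norm_nonneg _))
    have := le_of_tendsto (hev.abs) (Eventually.of_forall hb)
    exact this
  -- continuity of `t ↦ dualEmbed ι (u t)`
  have hcu : ContinuousOn (fun t => dualEmbed ι (u t)) (Set.Icc 0 T) :=
    hconv.continuousOn (Eventually.of_forall hcont).frequently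
  -- generic continuity lemma
  have contAux : ∀ (f : ℝ → H), (∀ t ∈ Set.Icc (0:ℝ) T, ‖f t‖ ≤ r) →
      ContinuousOn (fun t => dualEmbed ι (f t)) (Set.Icc 0 T) →
      ∀ h : H, ContinuousOn (fun t => ⟪f t, h⟫) (Set.Icc 0 T) := by
    intro f hb hc h t0 ht0
    rw [Metric.continuousWithinAt_iff]
    intro ε hε
    obtain ⟨φ, hφ⟩ := approx_bounds ι hdense hr.le hε h
    have hc0 := (hc t0 ht0)
    rw [Metric.continuousWithinAt_iff] at hc0
    obtain ⟨δ, hδ, hδ'⟩ := hc0 (ε / (2 * (‖φ‖ + 1))) (by positivity)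
    refine ⟨δ, hδ, fun t ht hdist => ?_⟩
    rw [Real.dist_eq]
    have hest := key_est ι (f t) (f t0) (hb t ht) (hb t0 ht0) h φ
    have hd := hδ' ht hdist
    rw [dist_eq_norm] at hd
    have h1 : ‖dualEmbed ι (f t) - dualEmbed ι (f t0)‖ * ‖φ‖ < ε / 2 :=
      mul_lt_half (norm_nonneg _) (norm_nonneg _) hd
    linarith [hest]
  have hcun : ∀ n, ∀ h : H, ContinuousOn (fun t => ⟪un n t, h⟫) (Set.Icc 0 T) :=
    fun n => contAux (un n) (hbdd n) (hcont n)
  have hcuH : ∀ h : H, ContinuousOn (fun t => ⟪u t, h⟫) (Set.Icc 0 T) :=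
    contAux u hub hcu
  refine ⟨hub, hcuH, hcun, ?_⟩
  -- uniform convergence
  intro h
  rw [Metric.tendstoUniformlyOn_iff]
  intro ε hε
  obtain ⟨φ, hφ⟩ := approx_bounds ι hdense hr.le hε h
  have := (Metric.tendstoUniformlyOn_iff.mp hconv) (ε / (2 * (‖φ‖ + 1))) (by positivity)
  filter_upwards [this] with n hn t ht
  rw [Real.dist_eq]
  have hest := key_est ι (u t) (un n t) (hub t ht) (hbdd n t ht) h φ
  have hd := hn t ht
  rw [dist_eq_norm] at hd
  have h1 : ‖dualEmbed ι (u t) - dualEmbed ι (un n t)‖ * ‖φ‖ < ε / 2 :=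
    mul_lt_half (norm_nonneg _) (norm_nonneg _) hd
  linarith [hest]
end

section
/- Let u ∈ L²(0,T;H) and let (u_n) be bounded in L²(0,T;H) with u_n → u in L²(0,T;H_loc). Fix γ > d/2 + 1. Then for every t ∈ [0,T] and every ψ ∈ V_γ, ∫₀^t ⟨B(u_n(s), u_n(s)), ψ⟩ ds → ∫₀^t ⟨B(u(s), u(s)), ψ⟩ ds as n → ∞. -/
open MeasureTheory Filter

/-- Cauchy–Schwarz for integrals of nonnegative real `L²` functions. -/
lemma holder2 {α : Type*} [MeasurableSpace α] {μ : Measure α} {f g : α → ℝ}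
    (hf0 : ∀ x, 0 ≤ f x) (hg0 : ∀ x, 0 ≤ g x)
    (hf : MemLp f 2 μ) (hg : MemLp g 2 μ) :
    ∫ a, f a * g a ∂μ ≤ Real.sqrt (∫ a, f a ^ 2 ∂μ) * Real.sqrt (∫ a, g a ^ 2 ∂μ) := by
  have h2 : (2 : ENNReal) = ENNReal.ofReal (2:ℝ) := by norm_num
  have key := integral_mul_le_Lp_mul_Lq_of_nonneg (μ := μ) (p := 2) (q := 2)
    ⟨by norm_num, by norm_num, by norm_num⟩ (Eventually.of_forall hf0) (Eventually.of_forall hg0)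
    (h2 ▸ hf) (h2 ▸ hg)
  calc ∫ a, f a * g a ∂μ
      ≤ (∫ a, f a ^ (2:ℝ) ∂μ) ^ (1/2:ℝ) * (∫ a, g a ^ (2:ℝ) ∂μ) ^ (1/2:ℝ) := key
    _ = Real.sqrt (∫ a, f a ^ 2 ∂μ) * Real.sqrt (∫ a, g a ^ 2 ∂μ) := by
        rw [Real.sqrt_eq_rpow, Real.sqrt_eq_rpow]
        congr 2 <;>
        · refine integral_congr_ae (Eventually.of_forall fun x => ?_)
          rw [show (2:ℝ) = ((2:ℕ):ℝ) by norm_num]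
          simp [Real.rpow_natCast]

/-- Product of two real `L²` functions is integrable. -/
lemma integrable_mul_of_memL2 {α : Type*} [MeasurableSpace α] {μ : Measure α} {f g : α → ℝ}
    (hf : MemLp f 2 μ) (hg : MemLp g 2 μ) :
    Integrable (fun x => f x * g x) μ := by
  refine Integrable.mono' (g := fun x => f x ^ 2 + g x ^ 2)
    (hf.integrable_sq.add hg.integrable_sq) (hf.1.mul hg.1)
    (Eventually.of_forall fun x => ?_)
  show ‖f x * g x‖ ≤ f x ^ 2 + g x ^ 2
  rw [Real.norm_eq_abs, abs_mul]
  nlinarith [abs_nonneg (f x), abs_nonneg (g x), sq_abs (f x), sq_abs (g x),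
    sq_nonneg (|f x| - |g x|)]

set_option maxHeartbeats 1000000 in
/-- (Lemma B.1.)  Let `u ∈ L²(0,T;H)` and let `(u_n)` be bounded in `L²(0,T;H)` with
`u_n → u` in `L²(0,T;H_loc)` (the local seminorms given by the localization operators
`ρ R`).  Let `B : H × H → V_γ′` be the continuous bilinear extension of the
Navier–Stokes nonlinearity (`γ > d/2 + 1`), which is local on a dense set `D ⊆ V_γ`
of test functions:  `|⟨B(v,w), ψ⟩| ≤ C |ρ_R v|_H |ρ_R w|_H ‖ψ‖` for `ψ ∈ D` with
support in `𝒪_R`.  Then for every `t ∈ [0,T]` and every `ψ ∈ V_γ`,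
`∫₀ᵗ ⟨B(u_n(s),u_n(s)), ψ⟩ ds → ∫₀ᵗ ⟨B(u(s),u(s)), ψ⟩ ds`. -/
theorem stmt_14 {H Vγ : Type*}
    [NormedAddCommGroup H] [InnerProductSpace ℝ H] [CompleteSpace H]
    [NormedAddCommGroup Vγ] [NormedSpace ℝ Vγ]
    (B : H →L[ℝ] H →L[ℝ] StrongDual ℝ Vγ)
    (ρ : ℕ → H →L[ℝ] H)
    (D : Set Vγ) (hDdense : Dense D)
    (hloc : ∀ ψ ∈ D, ∃ (R : ℕ) (C : ℝ), 0 ≤ C ∧ ∀ v w : H,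
      |B v w ψ| ≤ C * ‖ρ R v‖ * ‖ρ R w‖ * ‖ψ‖)
    (T : ℝ) (hT : 0 < T)
    (u : ℝ → H) (hu : MemLp u 2 (volume.restrict (Set.Ioc 0 T)))
    (un : ℕ → ℝ → H) (hun : ∀ n, MemLp (un n) 2 (volume.restrict (Set.Ioc 0 T)))
    (hbdd : ∃ M : ℝ, ∀ n, (∫ t in Set.Ioc 0 T, ‖un n t‖ ^ 2) ≤ M)
    (hconv : ∀ R : ℕ,
      Tendsto (fun n => ∫ t in Set.Ioc 0 T, ‖ρ R (un n t) - ρ R (u t)‖ ^ 2)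
        atTop (nhds 0)) :
    ∀ t ∈ Set.Icc (0:ℝ) T, ∀ ψ : Vγ,
      Tendsto (fun n => ∫ s in Set.Ioc 0 t, B (un n s) (un n s) ψ) atTop
        (nhds (∫ s in Set.Ioc 0 t, B (u s) (u s) ψ)) := by
  letI : NormedAddCommGroup (StrongDual ℝ Vγ) := ContinuousLinearMap.toNormedAddCommGroup
  letI : NormedSpace ℝ (StrongDual ℝ Vγ) := ContinuousLinearMap.toNormedSpace
  obtain ⟨M, hM⟩ := hbdd
  intro t ht ψ
  have hsub : Set.Ioc (0:ℝ) t ⊆ Set.Ioc 0 T := Set.Ioc_subset_Ioc_right ht.2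
  set μ : Measure ℝ := volume.restrict (Set.Ioc (0:ℝ) t) with hμdef
  have hle : μ ≤ volume.restrict (Set.Ioc (0:ℝ) T) := Measure.restrict_mono hsub le_rfl
  have hu2 : MemLp u 2 μ := hu.mono_measure hle
  have hun2 : ∀ n, MemLp (un n) 2 μ := fun n => (hun n).mono_measure hle
  have husq : Integrable (fun s => ‖u s‖ ^ 2) μ := hu2.norm.integrable_sq
  have hunsq : ∀ n, Integrable (fun s => ‖un n s‖ ^ 2) μ := fun n => (hun2 n).norm.integrable_sq
  -- bound on the L² norms over (0,t]
  have hMn : ∀ n, ∫ s, ‖un n s‖ ^ 2 ∂μ ≤ M := by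
    intro n
    refine le_trans ?_ (hM n)
    exact setIntegral_mono_set (hun n).norm.integrable_sq
      (Eventually.of_forall fun s => by positivity) (HasSubset.Subset.eventuallyLE hsub)
  set Mu : ℝ := ∫ s, ‖u s‖ ^ 2 ∂μ with hMudef
  have hMu0 : 0 ≤ Mu := integral_nonneg fun s => by positivity
  have hM0 : 0 ≤ M := le_trans (integral_nonneg fun s => by positivity) (hMn 0)
  -- pointwise crude bound
  have hBpt : ∀ (v : H) (φ : Vγ), |B v v φ| ≤ ‖B‖ * ‖φ‖ * ‖v‖ ^ 2 := by
    intro v φ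
    calc |B v v φ| = ‖(B v v) φ‖ := (Real.norm_eq_abs _).symm
      _ ≤ ‖B v v‖ * ‖φ‖ := (B v v).le_opNorm φ
      _ ≤ (‖B‖ * ‖v‖ * ‖v‖) * ‖φ‖ :=
          mul_le_mul_of_nonneg_right (B.le_opNorm₂ v v) (norm_nonneg φ)
      _ = ‖B‖ * ‖φ‖ * ‖v‖ ^ 2 := by ring
  have hcont : ∀ φ : Vγ, Continuous fun v : H => B v v φ := by
    intro φ; fun_prop
  have hmeasn : ∀ n (φ : Vγ), AEStronglyMeasurable (fun s => B (un n s) (un n s) φ) μ :=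
    fun n φ => (hcont φ).comp_aestronglyMeasurable (hun2 n).1
  have hmeasu : ∀ φ : Vγ, AEStronglyMeasurable (fun s => B (u s) (u s) φ) μ :=
    fun φ => (hcont φ).comp_aestronglyMeasurable hu2.1
  have hIntn : ∀ n (φ : Vγ), Integrable (fun s => B (un n s) (un n s) φ) μ := by
    intro n φ
    refine ((hunsq n).const_mul (‖B‖ * ‖φ‖)).mono' (hmeasn n φ)
      (Eventually.of_forall fun s => ?_)
    simpa [Real.norm_eq_abs, mul_assoc] using hBpt (un n s) φ
  have hIntu : ∀ φ : Vγ, Integrable (fun s => B (u s) (u s) φ) μ := by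
    intro φ
    refine (husq.const_mul (‖B‖ * ‖φ‖)).mono' (hmeasu φ)
      (Eventually.of_forall fun s => ?_)
    simpa [Real.norm_eq_abs, mul_assoc] using hBpt (u s) φ
  -- uniform Lipschitz in the test function
  have hLipn : ∀ n (φ : Vγ), |∫ s, B (un n s) (un n s) φ ∂μ| ≤ ‖B‖ * ‖φ‖ * M := by
    intro n φ
    calc |∫ s, B (un n s) (un n s) φ ∂μ| ≤ ∫ s, |B (un n s) (un n s) φ| ∂μ := by
          simpa [Real.norm_eq_abs] using norm_integral_le_integral_norm
            (μ := μ) (fun s => B (un n s) (un n s) φ)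
      _ ≤ ∫ s, ‖B‖ * ‖φ‖ * ‖un n s‖ ^ 2 ∂μ := by
          refine integral_mono (hIntn n φ).abs ((hunsq n).const_mul (‖B‖ * ‖φ‖)) ?_
          intro s; simpa [mul_assoc] using hBpt (un n s) φ
      _ = ‖B‖ * ‖φ‖ * ∫ s, ‖un n s‖ ^ 2 ∂μ := by
          rw [integral_const_mul]
      _ ≤ ‖B‖ * ‖φ‖ * M := by
          have := hMn n
          have h0 : 0 ≤ ‖B‖ * ‖φ‖ := by positivity
          nlinarith
  have hLipu : ∀ φ : Vγ, |∫ s, B (u s) (u s) φ ∂μ| ≤ ‖B‖ * ‖φ‖ * Mu := by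
    intro φ
    calc |∫ s, B (u s) (u s) φ ∂μ| ≤ ∫ s, |B (u s) (u s) φ| ∂μ := by
          simpa [Real.norm_eq_abs] using norm_integral_le_integral_norm
            (μ := μ) (fun s => B (u s) (u s) φ)
      _ ≤ ∫ s, ‖B‖ * ‖φ‖ * ‖u s‖ ^ 2 ∂μ := by
          refine integral_mono (hIntu φ).abs (husq.const_mul (‖B‖ * ‖φ‖)) ?_
          intro s; simpa [mul_assoc] using hBpt (u s) φ
      _ = ‖B‖ * ‖φ‖ * Mu := by rw [integral_const_mul]
  -- convergence for test functions in D
  have hD : ∀ φ ∈ D, Tendsto (fun n => ∫ s, B (un n s) (un n s) φ ∂μ) atTop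
      (nhds (∫ s, B (u s) (u s) φ ∂μ)) := by
    intro φ hφ
    obtain ⟨R, C, hC0, hbound⟩ := hloc φ hφ
    -- pointwise bound on the difference
    have hpt : ∀ n s, |B (un n s) (un n s) φ - B (u s) (u s) φ|
        ≤ (C * ‖φ‖ * ‖ρ R‖) *
          (‖ρ R (un n s) - ρ R (u s)‖ * (‖un n s‖ + ‖u s‖)) := by
      intro n s
      set a := un n s with ha
      set b := u s with hb
      have hdecomp : B a a φ - B b b φ = B (a - b) a φ + B b (a - b) φ := by
        simp only [map_sub, ContinuousLinearMap.sub_apply]; ring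
      calc |B a a φ - B b b φ| ≤ |B (a - b) a φ| + |B b (a - b) φ| := by
            rw [hdecomp]; exact abs_add_le _ _
        _ ≤ C * ‖ρ R (a - b)‖ * ‖ρ R a‖ * ‖φ‖ + C * ‖ρ R b‖ * ‖ρ R (a - b)‖ * ‖φ‖ :=
            add_le_add (hbound _ _) (hbound _ _)
        _ ≤ C * ‖ρ R (a - b)‖ * (‖ρ R‖ * ‖a‖) * ‖φ‖
              + C * (‖ρ R‖ * ‖b‖) * ‖ρ R (a - b)‖ * ‖φ‖ := by
            gcongr <;> exact ContinuousLinearMap.le_opNorm _ _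
        _ = (C * ‖φ‖ * ‖ρ R‖) * (‖ρ R a - ρ R b‖ * (‖a‖ + ‖b‖)) := by
            rw [map_sub]; ring
    -- L² data
    have hfmem : ∀ n, MemLp (fun s => ‖ρ R (un n s) - ρ R (u s)‖) 2 μ := fun n =>
      (((ρ R).comp_memLp' (hun2 n)).sub ((ρ R).comp_memLp' hu2)).norm
    have hgmem : ∀ n, MemLp (fun s => ‖un n s‖ + ‖u s‖) 2 μ := fun n =>
      (hun2 n).norm.add hu2.norm
    have hmul : ∀ n, Integrable
        (fun s => ‖ρ R (un n s) - ρ R (u s)‖ * (‖un n s‖ + ‖u s‖)) μ := fun n =>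
      integrable_mul_of_memL2 (hfmem n) (hgmem n)
    -- second factor bound
    have hQ : ∀ n, ∫ s, (‖un n s‖ + ‖u s‖) ^ 2 ∂μ ≤ 2 * M + 2 * Mu := by
      intro n
      have h1 : ∫ s, (‖un n s‖ + ‖u s‖) ^ 2 ∂μ
          ≤ ∫ s, (2 * ‖un n s‖ ^ 2 + 2 * ‖u s‖ ^ 2) ∂μ := by
        refine integral_mono (hgmem n).integrable_sq
          (((hunsq n).const_mul 2).add (husq.const_mul 2)) ?_
        intro s
        show (‖un n s‖ + ‖u s‖) ^ 2 ≤ 2 * ‖un n s‖ ^ 2 + 2 * ‖u s‖ ^ 2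
        nlinarith [norm_nonneg (un n s), norm_nonneg (u s), sq_nonneg (‖un n s‖ - ‖u s‖)]
      rw [integral_add ((hunsq n).const_mul 2) (husq.const_mul 2),
        integral_const_mul, integral_const_mul] at h1
      have := hMn n
      linarith
    -- first factor bound (move to the interval (0,T])
    have hIle : ∀ n, ∫ s, ‖ρ R (un n s) - ρ R (u s)‖ ^ 2 ∂μ
        ≤ ∫ s in Set.Ioc 0 T, ‖ρ R (un n s) - ρ R (u s)‖ ^ 2 := by
      intro n
      refine setIntegral_mono_set
        ((((ρ R).comp_memLp' (hun n)).sub ((ρ R).comp_memLp' hu)).norm).integrable_sq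
        (Eventually.of_forall fun s => by positivity)
        (HasSubset.Subset.eventuallyLE hsub)
    -- the squeeze
    set c : ℝ := (C * ‖φ‖ * ‖ρ R‖) * Real.sqrt (2 * M + 2 * Mu) with hcdef
    have hc0 : 0 ≤ c := by positivity
    have hdiff : ∀ n, |∫ s, B (un n s) (un n s) φ ∂μ - ∫ s, B (u s) (u s) φ ∂μ|
        ≤ c * Real.sqrt (∫ s in Set.Ioc 0 T, ‖ρ R (un n s) - ρ R (u s)‖ ^ 2) := by
      intro n
      have heq : ∫ s, B (un n s) (un n s) φ ∂μ - ∫ s, B (u s) (u s) φ ∂μ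
          = ∫ s, (B (un n s) (un n s) φ - B (u s) (u s) φ) ∂μ :=
        (integral_sub (hIntn n φ) (hIntu φ)).symm
      rw [heq]
      calc |∫ s, (B (un n s) (un n s) φ - B (u s) (u s) φ) ∂μ|
          ≤ ∫ s, |B (un n s) (un n s) φ - B (u s) (u s) φ| ∂μ := by
            simpa [Real.norm_eq_abs] using norm_integral_le_integral_norm
              (μ := μ) (fun s => B (un n s) (un n s) φ - B (u s) (u s) φ)
        _ ≤ ∫ s, (C * ‖φ‖ * ‖ρ R‖) *
              (‖ρ R (un n s) - ρ R (u s)‖ * (‖un n s‖ + ‖u s‖)) ∂μ := by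
            refine integral_mono ((hIntn n φ).sub (hIntu φ)).abs
              ((hmul n).const_mul _) (fun s => hpt n s)
        _ = (C * ‖φ‖ * ‖ρ R‖) *
              ∫ s, ‖ρ R (un n s) - ρ R (u s)‖ * (‖un n s‖ + ‖u s‖) ∂μ := by
            rw [integral_const_mul]
        _ ≤ (C * ‖φ‖ * ‖ρ R‖) *
              (Real.sqrt (∫ s, ‖ρ R (un n s) - ρ R (u s)‖ ^ 2 ∂μ)
                * Real.sqrt (∫ s, (‖un n s‖ + ‖u s‖) ^ 2 ∂μ)) := by
            refine mul_le_mul_of_nonneg_left ?_ (by positivity)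
            exact holder2 (fun s => norm_nonneg _) (fun s => by positivity)
              (hfmem n) (hgmem n)
        _ ≤ (C * ‖φ‖ * ‖ρ R‖) *
              (Real.sqrt (∫ s in Set.Ioc 0 T, ‖ρ R (un n s) - ρ R (u s)‖ ^ 2)
                * Real.sqrt (2 * M + 2 * Mu)) := by
            refine mul_le_mul_of_nonneg_left ?_ (by positivity)
            exact mul_le_mul (Real.sqrt_le_sqrt (hIle n)) (Real.sqrt_le_sqrt (hQ n))
              (Real.sqrt_nonneg _) (Real.sqrt_nonneg _)
        _ = c * Real.sqrt (∫ s in Set.Ioc 0 T, ‖ρ R (un n s) - ρ R (u s)‖ ^ 2) := by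
            rw [hcdef]; ring
    have hb0 : Tendsto (fun n => c * Real.sqrt
        (∫ s in Set.Ioc 0 T, ‖ρ R (un n s) - ρ R (u s)‖ ^ 2)) atTop (nhds 0) := by
      have hsq : Tendsto (fun n => Real.sqrt
          (∫ s in Set.Ioc 0 T, ‖ρ R (un n s) - ρ R (u s)‖ ^ 2)) atTop (nhds 0) := by
        have := (Real.continuous_sqrt.tendsto 0).comp (hconv R)
        simpa [Function.comp_def] using this
      simpa using hsq.const_mul c
    have := squeeze_zero_norm (f := fun n =>
        (∫ s, B (un n s) (un n s) φ ∂μ) - ∫ s, B (u s) (u s) φ ∂μ)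
      (fun n => by simpa [Real.norm_eq_abs] using hdiff n) hb0
    exact tendsto_sub_nhds_zero_iff.mp this
  -- ε/3 argument using density
  rw [Metric.tendsto_atTop]
  intro ε hε
  set K : ℝ := ‖B‖ * (M + Mu) + 1 with hKdef
  have hK0 : (0:ℝ) < K := by positivity
  obtain ⟨φ, hφD, hφ⟩ := Metric.mem_closure_iff.mp (hDdense ψ) (ε / (3 * K)) (by positivity)
  obtain ⟨N, hN⟩ := Metric.tendsto_atTop.mp (hD φ hφD) (ε / 3) (by positivity)
  refine ⟨N, fun n hn => ?_⟩
  have hnormlt : ‖ψ - φ‖ < ε / (3 * K) := by rwa [← dist_eq_norm]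
  have hcross1 : |(∫ s, B (un n s) (un n s) ψ ∂μ) - ∫ s, B (un n s) (un n s) φ ∂μ|
      ≤ K * ‖ψ - φ‖ := by
    have heq : (∫ s, B (un n s) (un n s) ψ ∂μ) - ∫ s, B (un n s) (un n s) φ ∂μ
        = ∫ s, B (un n s) (un n s) (ψ - φ) ∂μ := by
      rw [← integral_sub (hIntn n ψ) (hIntn n φ)]
      exact integral_congr_ae (Eventually.of_forall fun s => by simp [map_sub])
    rw [heq]
    refine le_trans (hLipn n (ψ - φ)) ?_
    have hBn : (0:ℝ) ≤ ‖B‖ := ContinuousLinearMap.opNorm_nonneg B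
    have hn0 : (0:ℝ) ≤ ‖ψ - φ‖ := norm_nonneg _
    rw [hKdef]
    nlinarith [mul_nonneg (mul_nonneg hBn hMu0) hn0, hn0]
  have hcross2 : |(∫ s, B (u s) (u s) φ ∂μ) - ∫ s, B (u s) (u s) ψ ∂μ| ≤ K * ‖ψ - φ‖ := by
    have heq : (∫ s, B (u s) (u s) φ ∂μ) - ∫ s, B (u s) (u s) ψ ∂μ
        = ∫ s, B (u s) (u s) (φ - ψ) ∂μ := by
      rw [← integral_sub (hIntu φ) (hIntu ψ)]
      exact integral_congr_ae (Eventually.of_forall fun s => by simp [map_sub])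
    rw [heq]
    refine le_trans (hLipu (φ - ψ)) ?_
    have hBn : (0:ℝ) ≤ ‖B‖ := ContinuousLinearMap.opNorm_nonneg B
    have hsymm : ‖φ - ψ‖ = ‖ψ - φ‖ := norm_sub_rev _ _
    rw [hsymm]
    have hn0 : (0:ℝ) ≤ ‖ψ - φ‖ := norm_nonneg _
    rw [hKdef]
    nlinarith [mul_nonneg (mul_nonneg hBn hM0) hn0, hn0]
  have hmid : |(∫ s, B (un n s) (un n s) φ ∂μ) - ∫ s, B (u s) (u s) φ ∂μ| < ε / 3 := by
    have := hN n hn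
    rwa [Real.dist_eq] at this
  have hKd : K * ‖ψ - φ‖ < ε / 3 := by
    have := mul_lt_mul_of_pos_left hnormlt hK0
    calc K * ‖ψ - φ‖ < K * (ε / (3 * K)) := this
      _ = ε / 3 := by field_simp
  rw [Real.dist_eq]
  calc |(∫ s, B (un n s) (un n s) ψ ∂μ) - ∫ s, B (u s) (u s) ψ ∂μ|
      ≤ |(∫ s, B (un n s) (un n s) ψ ∂μ) - ∫ s, B (un n s) (un n s) φ ∂μ|
        + |(∫ s, B (un n s) (un n s) φ ∂μ) - ∫ s, B (u s) (u s) φ ∂μ|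
        + |(∫ s, B (u s) (u s) φ ∂μ) - ∫ s, B (u s) (u s) ψ ∂μ| := by
        have := abs_sub_le (∫ s, B (un n s) (un n s) ψ ∂μ)
          (∫ s, B (un n s) (un n s) φ ∂μ) (∫ s, B (u s) (u s) ψ ∂μ)
        have h2 := abs_sub_le (∫ s, B (un n s) (un n s) φ ∂μ)
          (∫ s, B (u s) (u s) φ ∂μ) (∫ s, B (u s) (u s) ψ ∂μ)
        linarith
    _ < ε / 3 + ε / 3 + ε / 3 := by
        have := lt_of_le_of_lt hcross1 hKd
        have := lt_of_le_of_lt hcross2 hKd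
        gcongr
    _ = ε := by ring
end
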